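/- There exists a constant C > 0 such that for every real Hilbert space H, every twice continuously differentiable function w : ℝ → H, every t ∈ ℝ and every h > 0: ‖(1/2)w(t + h) − w(t) + (1/2)w(t − h)‖² ≤ C h³ ∫_{t−h}^{t+h} ‖w''(s)‖² ds. -/

import Mathlib

open intervalIntegral MeasureTheory

lemma taylor2_aux {H : Type} [NormedAddCommGroup H] [InnerProductSpace ℝ H] [CompleteSpace H]
    (w : ℝ → H) (hw : ContDiff ℝ 2 w) (a b : ℝ) :
    w b - w a - (b - a) • deriv w a = ∫ s in a..b, (b - s) • iteratedDeriv 2 w s := by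
  have hdw : Differentiable ℝ w := hw.differentiable (by norm_num)
  have h2 : ContDiff ℝ ((1:ℕ∞)+1) w := by exact_mod_cast hw
  have hdw2 : Differentiable ℝ (deriv w) :=
    ((contDiff_succ_iff_deriv.mp h2).2.2).differentiable (by norm_num)
  have hit : iteratedDeriv 2 w = deriv (deriv w) := by
    rw [show (2:ℕ) = 1 + 1 from rfl, iteratedDeriv_succ, iteratedDeriv_one]
  have hcont : Continuous (iteratedDeriv 2 w) := hw.continuous_iteratedDeriv 2 le_rfl
  have key : ∀ s ∈ Set.uIcc a b,
      HasDerivAt (fun s => w s + (b - s) • deriv w s) ((b - s) • iteratedDeriv 2 w s) s := by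
    intro s _
    have h1 : HasDerivAt w (deriv w s) s := (hdw s).hasDerivAt
    have h2' : HasDerivAt (deriv w) (iteratedDeriv 2 w s) s := by
      rw [hit]; exact (hdw2 s).hasDerivAt
    have h3 : HasDerivAt (fun s : ℝ => b - s) (-1) s := by
      simpa using (hasDerivAt_id s).const_sub b
    have h4 := h3.smul h2'
    have := h1.add h4
    convert this using 1
    · rfl
    · module
  have hint : IntervalIntegrable (fun s => (b - s) • iteratedDeriv 2 w s) volume a b :=
    (Continuous.smul (by continuity) hcont).intervalIntegrable a b
  have := integral_eq_sub_of_hasDerivAt key hint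
  rw [this]
  simp
  module

lemma cs_interval_aux (f : ℝ → ℝ) (hf : Continuous f) (hnn : ∀ s, 0 ≤ f s)
    (a b : ℝ) (hab : a ≤ b) :
    (∫ s in a..b, f s) ^ 2 ≤ (b - a) * ∫ s in a..b, f s ^ 2 := by
  set J := ∫ s in a..b, f s with hJ
  set A := ∫ s in a..b, f s ^ 2 with hA
  have hfi : IntervalIntegrable f volume a b := hf.intervalIntegrable a b
  have hf2i : IntervalIntegrable (fun s => f s ^ 2) volume a b :=
    (hf.pow 2).intervalIntegrable a b
  have hJnn : 0 ≤ J := intervalIntegral.integral_nonneg hab (fun s _ => hnn s)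
  have hAnn : 0 ≤ A := intervalIntegral.integral_nonneg hab (fun s _ => sq_nonneg _)
  have key : ∀ l : ℝ, 0 < l → J ≤ l * (b - a) / 2 + A / (2 * l) := by
    intro l hl
    have hmono : J ≤ ∫ s in a..b, (l / 2 + f s ^ 2 / (2 * l)) := by
      apply intervalIntegral.integral_mono_on hab hfi
      · exact (continuous_const.add ((hf.pow 2).div_const _)).intervalIntegrable a b
      · intro s _
        rw [← sub_nonneg, show l / 2 + f s ^ 2 / (2 * l) - f s = (f s - l) ^ 2 / (2 * l) by
          field_simp; ring]
        positivity
    calc J ≤ ∫ s in a..b, (l / 2 + f s ^ 2 / (2 * l)) := hmono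
      _ = l * (b - a) / 2 + A / (2 * l) := by
          rw [intervalIntegral.integral_add (intervalIntegrable_const) (hf2i.div_const _)]
          simp [intervalIntegral.integral_div, hA]
          ring
  rcases eq_or_lt_of_le hab with rfl | hlt
  · rw [hJ, intervalIntegral.integral_same]
    simp
  · have hba : 0 < b - a := by linarith
    rcases eq_or_lt_of_le hAnn with hA0 | hApos
    · have hJ0 : J ≤ 0 := by
        apply le_of_forall_pos_le_add
        intro ε hε
        have := key (2 * ε / (b - a)) (by positivity)
        rw [← hA0] at this
        calc J ≤ 2 * ε / (b - a) * (b - a) / 2 + 0 / (2 * (2 * ε / (b - a))) := this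
          _ = ε := by field_simp; ring
          _ ≤ 0 + ε := by linarith
      have hJ0' : J = 0 := le_antisymm hJ0 hJnn
      rw [hJ0']
      norm_num
      positivity
    · set l := Real.sqrt (A / (b - a)) with hl
      have hlpos : 0 < l := Real.sqrt_pos.mpr (by positivity)
      have hl2 : l ^ 2 = A / (b - a) := Real.sq_sqrt (by positivity)
      have hA' : A = l ^ 2 * (b - a) := by rw [hl2]; field_simp
      have hJle := key l hlpos
      have hRHS : (l * (b - a) / 2 + A / (2 * l)) ^ 2 = (b - a) * A := by
        rw [hA']; field_simp; ring
      calc J ^ 2 ≤ (l * (b - a) / 2 + A / (2 * l)) ^ 2 := pow_le_pow_left₀ hJnn hJle 2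
        _ = (b - a) * A := hRHS

/-- Pointwise consistency bound for the time filter residual. -/
theorem filter_residual_bound :
    ∃ C : ℝ, 0 < C ∧
      ∀ (H : Type) (_ : NormedAddCommGroup H) (_ : InnerProductSpace ℝ H)
        (_ : CompleteSpace H)
        (w : ℝ → H), ContDiff ℝ 2 w →
        ∀ (t : ℝ) (h : ℝ), 0 < h →
          ‖(1/2 : ℝ) • w (t + h) - w t + (1/2 : ℝ) • w (t - h)‖ ^ 2 ≤
            C * h ^ 3 * ∫ s in (t - h)..(t + h), ‖iteratedDeriv 2 w s‖ ^ 2 := by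
  refine ⟨1, one_pos, ?_⟩
  intro H _ _ _ w hw t h hh
  set D := iteratedDeriv 2 w with hD
  have hDc : Continuous D := hw.continuous_iteratedDeriv 2 le_rfl
  have hnormc : Continuous fun s => ‖D s‖ := hDc.norm
  set J := ∫ s in (t - h)..(t + h), ‖D s‖ with hJdef
  set A := ∫ s in (t - h)..(t + h), ‖D s‖ ^ 2 with hAdef
  have hAnn : 0 ≤ A :=
    intervalIntegral.integral_nonneg (by linarith) (fun s _ => sq_nonneg _)
  -- Taylor expansions
  have T1 := taylor2_aux w hw t (t + h)
  have T2 := taylor2_aux w hw t (t - h)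
  -- residual decomposition
  have hR : (1/2 : ℝ) • w (t + h) - w t + (1/2 : ℝ) • w (t - h) =
      (1/2 : ℝ) • (w (t + h) - w t - (t + h - t) • deriv w t) +
      (1/2 : ℝ) • (w (t - h) - w t - (t - h - t) • deriv w t) := by
    module
  -- bound the first integral
  have hI1 : ‖∫ s in t..(t + h), (t + h - s) • D s‖ ≤ ∫ s in t..(t + h), h * ‖D s‖ := by
    calc ‖∫ s in t..(t + h), (t + h - s) • D s‖
        ≤ ∫ s in t..(t + h), ‖(t + h - s) • D s‖ :=
          intervalIntegral.norm_integral_le_integral_norm (by linarith)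
      _ ≤ ∫ s in t..(t + h), h * ‖D s‖ := by
          apply intervalIntegral.integral_mono_on (by linarith)
          · exact ((Continuous.smul (by continuity) hDc).norm).intervalIntegrable t (t + h)
          · exact (continuous_const.mul hnormc).intervalIntegrable t (t + h)
          · intro s hs
            rw [norm_smul, Real.norm_eq_abs]
            apply mul_le_mul_of_nonneg_right _ (norm_nonneg _)
            rw [abs_le]
            constructor <;> [linarith [hs.2]; linarith [hs.1]]
  have hI2 : ‖∫ s in t..(t - h), (t - h - s) • D s‖ ≤ ∫ s in (t - h)..t, h * ‖D s‖ := by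
    rw [intervalIntegral.integral_symm, norm_neg]
    calc ‖∫ s in (t - h)..t, (t - h - s) • D s‖
        ≤ ∫ s in (t - h)..t, ‖(t - h - s) • D s‖ :=
          intervalIntegral.norm_integral_le_integral_norm (by linarith)
      _ ≤ ∫ s in (t - h)..t, h * ‖D s‖ := by
          apply intervalIntegral.integral_mono_on (by linarith)
          · exact ((Continuous.smul (by continuity) hDc).norm).intervalIntegrable (t - h) t
          · exact (continuous_const.mul hnormc).intervalIntegrable (t - h) t
          · intro s hs
            rw [norm_smul, Real.norm_eq_abs]
            apply mul_le_mul_of_nonneg_right _ (norm_nonneg _)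
            rw [abs_le]
            constructor <;> [linarith [hs.2]; linarith [hs.1]]
  -- combine the two pieces
  have hsum : (∫ s in (t - h)..t, h * ‖D s‖) + (∫ s in t..(t + h), h * ‖D s‖) = h * J := by
    rw [intervalIntegral.integral_add_adjacent_intervals
      (f := fun s => h * ‖D s‖)
      ((continuous_const.mul hnormc).intervalIntegrable (t - h) t)
      ((continuous_const.mul hnormc).intervalIntegrable t (t + h))]
    rw [hJdef, intervalIntegral.integral_const_mul]
  have hRle : ‖(1/2 : ℝ) • w (t + h) - w t + (1/2 : ℝ) • w (t - h)‖ ≤ (1/2) * (h * J) := by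
    rw [hR, T1, T2]
    calc ‖(1/2 : ℝ) • (∫ s in t..(t + h), (t + h - s) • D s) +
          (1/2 : ℝ) • (∫ s in t..(t - h), (t - h - s) • D s)‖
        ≤ ‖(1/2 : ℝ) • (∫ s in t..(t + h), (t + h - s) • D s)‖ +
          ‖(1/2 : ℝ) • (∫ s in t..(t - h), (t - h - s) • D s)‖ := norm_add_le _ _
      _ = (1/2) * ‖∫ s in t..(t + h), (t + h - s) • D s‖ +
          (1/2) * ‖∫ s in t..(t - h), (t - h - s) • D s‖ := by
            rw [norm_smul, norm_smul]; norm_num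
      _ ≤ (1/2) * (∫ s in t..(t + h), h * ‖D s‖) +
          (1/2) * (∫ s in (t - h)..t, h * ‖D s‖) := by
            gcongr
      _ = (1/2) * (h * J) := by rw [← hsum]; ring
  -- Cauchy–Schwarz
  have hCS : J ^ 2 ≤ (2 * h) * A := by
    have := cs_interval_aux (fun s => ‖D s‖) hnormc (fun s => norm_nonneg _)
      (t - h) (t + h) (by linarith)
    have he : t + h - (t - h) = 2 * h := by ring
    rw [he] at this
    exact this
  have hRnn : (0:ℝ) ≤ ‖(1/2 : ℝ) • w (t + h) - w t + (1/2 : ℝ) • w (t - h)‖ := norm_nonneg _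
  have hsq : ‖(1/2 : ℝ) • w (t + h) - w t + (1/2 : ℝ) • w (t - h)‖ ^ 2 ≤
      ((1/2) * (h * J)) ^ 2 := pow_le_pow_left₀ hRnn hRle 2
  have hmul := mul_le_mul_of_nonneg_left hCS (by positivity : (0:ℝ) ≤ h ^ 2 / 4)
  calc ‖(1/2 : ℝ) • w (t + h) - w t + (1/2 : ℝ) • w (t - h)‖ ^ 2
      ≤ ((1/2) * (h * J)) ^ 2 := hsq
    _ = h ^ 2 / 4 * J ^ 2 := by ring
    _ ≤ h ^ 2 / 4 * ((2 * h) * A) := hmul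
    _ = h ^ 3 * A / 2 := by ring
    _ ≤ 1 * h ^ 3 * A := by nlinarith [pow_pos hh 3]
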